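/- Let ρ = Σ_{a=1}^n p_a Π_a and σ with eigenvalues s_k as above, with d_HS(ρ,σ) ≤ δ < Δ/(1+√d). Define M_a = {k : |p_a − s_k| ≤ δ}. Then the sets M_a are pairwise disjoint and |M_a| = tr Π_a, i.e., the number of eigenvalues of σ within δ of p_a equals the degeneracy of p_a. -/

import Mathlib

open Matrix

private lemma sum_mulVec' {d m : ℕ} (f : Fin m → Matrix (Fin d) (Fin d) ℂ) (v : Fin d → ℂ) :
    (∑ a, f a) *ᵥ v = ∑ a, f a *ᵥ v := by
  ext i
  simp [mulVec, dotProduct, Matrix.sum_apply, Finset.sum_mul]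
  rw [Finset.sum_comm]

private lemma sum_dotProduct' {d m : ℕ} (f : Fin m → (Fin d → ℂ)) (w : Fin d → ℂ) :
    (∑ a, f a) ⬝ᵥ w = ∑ a, f a ⬝ᵥ w := by
  simp [dotProduct, Finset.sum_apply, Finset.sum_mul]
  rw [Finset.sum_comm]

private lemma dotProduct_sum' {d m : ℕ} (w : Fin d → ℂ) (f : Fin m → (Fin d → ℂ)) :
    w ⬝ᵥ (∑ a, f a) = ∑ a, w ⬝ᵥ f a := by
  simp [dotProduct, Finset.sum_apply, Finset.mul_sum]
  rw [Finset.sum_comm]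

private lemma onb_trace {d : ℕ} (ψ : Fin d → Fin d → ℂ)
    (hψ : ∀ k l, star (ψ k) ⬝ᵥ ψ l = if k = l then 1 else 0)
    (A : Matrix (Fin d) (Fin d) ℂ) :
    A.trace = ∑ k, star (ψ k) ⬝ᵥ A *ᵥ ψ k := by
  set U : Matrix (Fin d) (Fin d) ℂ := Matrix.of (fun i k => ψ k i) with hU
  have hUU : Uᴴ * U = 1 := by
    ext k l
    have := hψ k l
    simpa [Matrix.mul_apply, Matrix.conjTranspose_apply, dotProduct, Matrix.one_apply, hU] using this
  have hU2 : U * Uᴴ = 1 := mul_eq_one_comm.mp hUU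
  calc A.trace = (A * (U * Uᴴ)).trace := by rw [hU2, mul_one]
    _ = (A * U * Uᴴ).trace := by rw [mul_assoc]
    _ = (Uᴴ * (A * U)).trace := by rw [trace_mul_comm]
    _ = ∑ k, star (ψ k) ⬝ᵥ A *ᵥ ψ k := by
        rw [Matrix.trace]
        refine Finset.sum_congr rfl fun k _ => ?_
        simp [Matrix.diag, Matrix.mul_apply, Matrix.conjTranspose_apply, dotProduct, mulVec,
          Finset.mul_sum, hU]

private lemma trace_proj_nat {d : ℕ} (A : Matrix (Fin d) (Fin d) ℂ) (hA : A.IsHermitian)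
    (h2 : A * A = A) : ∃ m : ℕ, A.trace = (m : ℂ) := by
  have hev : ∀ i, hA.eigenvalues i = 0 ∨ hA.eigenvalues i = 1 := by
    intro i
    have h1 := hA.mulVec_eigenvectorBasis i
    have hv : ⇑(hA.eigenvectorBasis i) ≠ 0 := by
      have hne := hA.eigenvectorBasis.orthonormal.ne_zero i
      intro hc
      exact hne (by ext j; exact congrFun hc j)
    have h3 : (A * A) *ᵥ ⇑(hA.eigenvectorBasis i)
        = (hA.eigenvalues i * hA.eigenvalues i) • ⇑(hA.eigenvectorBasis i) := by
      rw [← mulVec_mulVec, h1, mulVec_smul, h1, smul_smul]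
    rw [h2, h1] at h3
    have h4 : (hA.eigenvalues i * hA.eigenvalues i - hA.eigenvalues i) •
        ⇑(hA.eigenvectorBasis i) = 0 := by
      rw [sub_smul, h3, sub_self]
    rcases smul_eq_zero.mp h4 with h5 | h5
    · have h6 : hA.eigenvalues i * (hA.eigenvalues i - 1) = 0 := by linear_combination h5
      rcases mul_eq_zero.mp h6 with h7 | h7
      · exact Or.inl h7
      · exact Or.inr (by linarith)
    · exact absurd h5 hv
  have htr : A.trace = ((∑ i, hA.eigenvalues i : ℝ) : ℂ) := by
    conv_lhs => rw [hA.spectral_theorem]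
    rw [Unitary.conjStarAlgAut_apply]
    rw [Matrix.trace_mul_cycle]
    rw [show (star (hA.eigenvectorUnitary : Matrix (Fin d) (Fin d) ℂ)) *
        (hA.eigenvectorUnitary : Matrix (Fin d) (Fin d) ℂ) = 1 from
      Matrix.mem_unitaryGroup_iff'.mp hA.eigenvectorUnitary.2]
    rw [one_mul, trace_diagonal]
    push_cast
    rfl
  refine ⟨(Finset.univ.filter fun i => hA.eigenvalues i = 1).card, ?_⟩
  rw [htr]
  have : (∑ i, hA.eigenvalues i) =
      ((Finset.univ.filter fun i => hA.eigenvalues i = 1).card : ℝ) := by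
    have h8 : ∀ i ∈ Finset.univ, hA.eigenvalues i =
        (if hA.eigenvalues i = 1 then (1:ℝ) else 0) := by
      intro i _
      rcases hev i with h | h <;> simp [h]
    rw [Finset.sum_congr rfl h8, ← Finset.sum_filter, Finset.sum_const, nsmul_eq_mul, mul_one]
  rw [this]
  push_cast
  rfl

theorem stmt_10 (d n : ℕ)
    (P : Fin n → Matrix (Fin d) (Fin d) ℂ)
    (hPh : ∀ a, (P a).IsHermitian)
    (hPo : ∀ a b, P a * P b = if a = b then P a else 0)
    (hP1 : ∑ a, P a = 1)
    (p : Fin n → ℝ) (hpinj : Function.Injective p)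
    (ψ : Fin d → (Fin d → ℂ))
    (hψ : ∀ k l, star (ψ k) ⬝ᵥ ψ l = if k = l then 1 else 0)
    (s : Fin d → ℝ)
    (ρ σ : Matrix (Fin d) (Fin d) ℂ)
    (hρ : ρ = ∑ a, (p a : ℂ) • P a)
    (hσ : σ = ∑ k, (s k : ℂ) • vecMulVec (ψ k) (star (ψ k)))
    (δ : ℝ) (hδ0 : 0 ≤ δ)
    (hdist : Real.sqrt (((ρ - σ) * (ρ - σ)).trace.re) ≤ δ)
    (hn : 2 ≤ n) (hPne : ∀ a, P a ≠ 0)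
    (Δ : ℝ) (hΔ : ∀ a b, a ≠ b → Δ ≤ |p a - p b|)
    (hΔex : ∃ a b, a ≠ b ∧ Δ = |p a - p b|)
    (hδΔ : δ < Δ / (1 + Real.sqrt d))
    (M : Fin n → Finset (Fin d))
    (hM : ∀ a, M a = Finset.univ.filter (fun k => |p a - s k| ≤ δ)) :
    (∀ a b, a ≠ b → Disjoint (M a) (M b)) ∧
    (∀ a, ((M a).card : ℂ) = (P a).trace) := by
  classical
  -- basic numerology
  have hd1 : 1 ≤ d := by
    by_contra h
    push_neg at h
    interval_cases d
    exact hPne ⟨0, by omega⟩ (by ext i j; exact absurd i.2 (by omega))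
  have hsd : (1:ℝ) ≤ Real.sqrt d := by
    rw [show (1:ℝ) = Real.sqrt 1 by simp]
    exact Real.sqrt_le_sqrt (by exact_mod_cast hd1)
  have h1d : (0:ℝ) < 1 + Real.sqrt d := by linarith
  have hΔpos : 0 < Δ := by
    have h0 : 0 < Δ / (1 + Real.sqrt d) := lt_of_le_of_lt hδ0 hδΔ
    by_contra h
    push_neg at h
    have : Δ / (1 + Real.sqrt d) ≤ 0 := div_nonpos_of_nonpos_of_nonneg h h1d.le
    linarith
  have h2δ : 2 * δ < Δ := by
    have h1 : Δ / (1 + Real.sqrt d) ≤ Δ / 2 :=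
      div_le_div_of_nonneg_left hΔpos.le (by norm_num) (by linarith)
    have h2 := lt_of_lt_of_le hδΔ h1
    linarith
  have hMmem : ∀ a k, k ∈ M a ↔ |p a - s k| ≤ δ := by
    intro a k; rw [hM a]; simp
  -- disjointness
  have hdisj : ∀ a b, a ≠ b → Disjoint (M a) (M b) := by
    intro a b hab
    rw [Finset.disjoint_left]
    intro k hka hkb
    rw [hMmem] at hka hkb
    have h1 := hΔ a b hab
    have h2 : |p a - p b| ≤ |p a - s k| + |p b - s k| := by
      rw [abs_sub_comm (p b) (s k)]
      exact abs_sub_le _ _ _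
    linarith
  -- projections and inner products
  have hPP : ∀ a, P a * P a = P a := fun a => by simpa using hPo a a
  have hherm_dot : ∀ (A : Matrix (Fin d) (Fin d) ℂ), A.IsHermitian →
      ∀ x y : Fin d → ℂ, star (A *ᵥ x) ⬝ᵥ y = star x ⬝ᵥ (A *ᵥ y) := by
    intro A hA x y
    rw [star_mulVec, ← dotProduct_mulVec, hA.eq]
  have hself : ∀ v : Fin d → ℂ, star v ⬝ᵥ v = ((∑ i, Complex.normSq (v i) : ℝ) : ℂ) := by
    intro v
    rw [dotProduct]
    push_cast
    refine Finset.sum_congr rfl fun i _ => ?_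
    simp [Complex.normSq_eq_conj_mul_self]
  set Q : Fin n → Fin d → ℝ := fun a k => ∑ i, Complex.normSq ((P a *ᵥ ψ k) i) with hQdef
  have hQ_inner : ∀ a k, star (ψ k) ⬝ᵥ (P a *ᵥ ψ k) = ((Q a k : ℝ) : ℂ) := by
    intro a k
    conv_lhs => rw [← hPP a, ← mulVec_mulVec, ← hherm_dot (P a) (hPh a)]
    exact hself _
  have hQ0 : ∀ a k, 0 ≤ Q a k := fun a k => Finset.sum_nonneg fun i _ => Complex.normSq_nonneg _
  have hQsum : ∀ k, ∑ a, Q a k = 1 := by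
    intro k
    have hc : ((∑ a, Q a k : ℝ) : ℂ) = 1 := by
      push_cast
      calc ∑ a, ((Q a k : ℝ) : ℂ) = ∑ a, star (ψ k) ⬝ᵥ (P a *ᵥ ψ k) :=
            Finset.sum_congr rfl fun a _ => (hQ_inner a k).symm
        _ = star (ψ k) ⬝ᵥ ((∑ a, P a) *ᵥ ψ k) := by rw [sum_mulVec', dotProduct_sum']
        _ = 1 := by rw [hP1, one_mulVec]; simpa using hψ k k
    exact_mod_cast hc
  have hQle1 : ∀ a k, Q a k ≤ 1 := by
    intro a k
    rw [← hQsum k]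
    exact Finset.single_le_sum (fun b _ => hQ0 b k) (Finset.mem_univ a)
  have hcross : ∀ a b k, star (P a *ᵥ ψ k) ⬝ᵥ (P b *ᵥ ψ k)
      = if a = b then ((Q a k : ℝ) : ℂ) else 0 := by
    intro a b k
    rw [hherm_dot (P a) (hPh a), mulVec_mulVec, hPo]
    by_cases hab : a = b
    · subst hab; simpa using hQ_inner a k
    · simp [hab]
  -- σ acts on ψ k as s k
  have hσψ : ∀ k, σ *ᵥ ψ k = (s k : ℂ) • ψ k := by
    intro k
    rw [hσ, sum_mulVec']
    have hterm : ∀ l, ((s l : ℂ) • vecMulVec (ψ l) (star (ψ l))) *ᵥ ψ k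
        = if l = k then (s l : ℂ) • ψ l else 0 := by
      intro l
      have h2 : vecMulVec (ψ l) (star (ψ l)) *ᵥ ψ k = (if l = k then (1:ℂ) else 0) • ψ l := by
        ext i
        simp only [mulVec, dotProduct, vecMulVec_apply, Pi.smul_apply, smul_eq_mul]
        calc ∑ x, ψ l i * star (ψ l) x * ψ k x = ψ l i * ∑ x, star (ψ l) x * ψ k x := by
              rw [Finset.mul_sum]
              exact Finset.sum_congr rfl fun x _ => by ring
          _ = ψ l i * (if l = k then 1 else 0) := by
              rw [show ∑ x, star (ψ l) x * ψ k x = if l = k then (1:ℂ) else 0 from hψ l k]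
          _ = (if l = k then 1 else 0) * ψ l i := by ring
      rw [smul_mulVec, h2, smul_smul]
      by_cases hlk : l = k <;> simp [hlk]
    rw [Finset.sum_congr rfl fun l _ => hterm l, Finset.sum_ite_eq' Finset.univ k
      (fun l => (s l : ℂ) • ψ l)]
    simp
  -- residual vector
  have hres : ∀ k, (ρ - σ) *ᵥ ψ k = ∑ a, ((p a : ℂ) - (s k : ℂ)) • (P a *ᵥ ψ k) := by
    intro k
    have hid : ψ k = ∑ a, P a *ᵥ ψ k := by rw [← sum_mulVec', hP1, one_mulVec]
    rw [sub_mulVec, hρ, sum_mulVec', hσψ k]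
    calc (∑ a, ((p a : ℂ) • P a) *ᵥ ψ k) - (s k : ℂ) • ψ k
        = (∑ a, (p a : ℂ) • (P a *ᵥ ψ k)) - ∑ a, (s k : ℂ) • (P a *ᵥ ψ k) := by
          congr 1
          · exact Finset.sum_congr rfl fun a _ => smul_mulVec _ _ _
          · rw [← Finset.smul_sum, ← hid]
      _ = ∑ a, ((p a : ℂ) - (s k : ℂ)) • (P a *ᵥ ψ k) := by
          rw [← Finset.sum_sub_distrib]
          exact Finset.sum_congr rfl fun a _ => (sub_smul _ _ _).symm
  set N : Fin d → ℝ := fun k => ∑ a, (p a - s k)^2 * Q a k with hNdef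
  have hN0 : ∀ k, 0 ≤ N k := fun k =>
    Finset.sum_nonneg fun a _ => mul_nonneg (sq_nonneg _) (hQ0 a k)
  have hNval : ∀ k, star ((ρ - σ) *ᵥ ψ k) ⬝ᵥ ((ρ - σ) *ᵥ ψ k) = ((N k : ℝ) : ℂ) := by
    intro k
    rw [hres k, star_sum, sum_dotProduct']
    have hterm : ∀ a, star (((p a : ℂ) - (s k : ℂ)) • (P a *ᵥ ψ k)) ⬝ᵥ
        (∑ b, ((p b : ℂ) - (s k : ℂ)) • (P b *ᵥ ψ k))
        = (((p a - s k)^2 * Q a k : ℝ) : ℂ) := by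
      intro a
      rw [dotProduct_sum']
      have h1 : ∀ b, star (((p a : ℂ) - (s k : ℂ)) • (P a *ᵥ ψ k)) ⬝ᵥ
          (((p b : ℂ) - (s k : ℂ)) • (P b *ᵥ ψ k))
          = if a = b then (((p a - s k)^2 * Q a k : ℝ) : ℂ) else 0 := by
        intro b
        rw [star_smul, smul_dotProduct, dotProduct_smul, hcross a b k]
        by_cases hab : a = b
        · subst hab
          simp only [if_pos rfl, smul_eq_mul]
          rw [show ((p a : ℂ) - (s k : ℂ)) = ((p a - s k : ℝ) : ℂ) by push_cast; ring]
          simp only [RCLike.star_def, Complex.conj_ofReal, if_true]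
          push_cast
          ring
        · simp [hab]
      rw [Finset.sum_congr rfl fun b _ => h1 b, Finset.sum_ite_eq Finset.univ a
        (fun _ => (((p a - s k)^2 * Q a k : ℝ) : ℂ))]
      simp
    rw [Finset.sum_congr rfl fun a _ => hterm a, hNdef]
    push_cast
    rfl
  -- trace of the squared difference
  have hρH : ρ.IsHermitian := by
    rw [hρ]
    show (∑ a, (p a : ℂ) • P a)ᴴ = _
    rw [conjTranspose_sum]
    exact Finset.sum_congr rfl fun a _ => by
      rw [conjTranspose_smul, (hPh a).eq]
      congr 1
      exact Complex.conj_ofReal _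
  have hσH : σ.IsHermitian := by
    rw [hσ]
    show (∑ k, (s k : ℂ) • vecMulVec (ψ k) (star (ψ k)))ᴴ = _
    rw [conjTranspose_sum]
    refine Finset.sum_congr rfl fun k _ => ?_
    rw [conjTranspose_smul]
    congr 1
    · exact Complex.conj_ofReal _
    · ext i j
      simp [conjTranspose_apply, vecMulVec_apply, mul_comm]
  have hAH : (ρ - σ).IsHermitian := hρH.sub hσH
  have htrace2 : ((ρ - σ) * (ρ - σ)).trace = ((∑ k, N k : ℝ) : ℂ) := by
    rw [onb_trace ψ hψ]
    push_cast
    refine Finset.sum_congr rfl fun k _ => ?_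
    rw [← mulVec_mulVec, ← hherm_dot _ hAH, hNval k]
  have hNsum : ∑ k, N k ≤ δ^2 := by
    have h1 : ((ρ - σ) * (ρ - σ)).trace.re = ∑ k, N k := by rw [htrace2, Complex.ofReal_re]
    rw [h1] at hdist
    have h2 : 0 ≤ ∑ k, N k := Finset.sum_nonneg fun k _ => hN0 k
    nlinarith [Real.sq_sqrt h2, Real.sqrt_nonneg (∑ k, N k)]
  have hNk : ∀ k, N k ≤ δ^2 := fun k =>
    le_trans (Finset.single_le_sum (fun j _ => hN0 j) (Finset.mem_univ k)) hNsum
  -- every eigenvalue of σ is δ-close to some p a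
  have hcover : ∀ k, ∃ a, |p a - s k| ≤ δ := by
    intro k
    obtain ⟨a, -, ha⟩ := Finset.exists_min_image Finset.univ (fun a => |p a - s k|)
      ⟨⟨0, by omega⟩, Finset.mem_univ _⟩
    refine ⟨a, ?_⟩
    have h2 : |p a - s k|^2 ≤ N k := by
      calc |p a - s k|^2 = |p a - s k|^2 * ∑ b, Q b k := by rw [hQsum k, mul_one]
        _ = ∑ b, |p a - s k|^2 * Q b k := by rw [Finset.mul_sum]
        _ ≤ ∑ b, (p b - s k)^2 * Q b k := by
            refine Finset.sum_le_sum fun b _ => ?_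
            have h3 : |p a - s k|^2 ≤ (p b - s k)^2 := by
              rw [← sq_abs (p b - s k)]
              exact pow_le_pow_left₀ (abs_nonneg _) (ha b (Finset.mem_univ b)) 2
            exact mul_le_mul_of_nonneg_right h3 (hQ0 b k)
    have h3 := le_trans h2 (hNk k)
    nlinarith [abs_nonneg (p a - s k)]
  have hgapA : ∀ a k, k ∉ M a → Δ - δ ≤ |p a - s k| := by
    intro a k hk
    rw [hMmem] at hk
    push_neg at hk
    obtain ⟨b, hb⟩ := hcover k
    have hab : a ≠ b := by rintro rfl; linarith
    have h1 := hΔ a b hab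
    have h2 : |p a - p b| ≤ |p a - s k| + |p b - s k| := by
      rw [abs_sub_comm (p b) (s k)]
      exact abs_sub_le _ _ _
    linarith
  -- upper bound
  have hTub : ∀ a, ∑ k, Q a k < (M a).card + 1 := by
    intro a
    have hsplit : ∑ k, Q a k = ∑ k ∈ M a, Q a k + ∑ k ∈ (M a)ᶜ, Q a k :=
      (Finset.sum_add_sum_compl (M a) _).symm
    have h1 : ∑ k ∈ M a, Q a k ≤ (M a).card := by
      calc ∑ k ∈ M a, Q a k ≤ ∑ _k ∈ M a, (1:ℝ) := Finset.sum_le_sum fun k _ => hQle1 a k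
        _ = (M a).card := by simp
    have h2 : (Δ - δ)^2 * ∑ k ∈ (M a)ᶜ, Q a k ≤ δ^2 := by
      rw [Finset.mul_sum]
      calc ∑ k ∈ (M a)ᶜ, (Δ - δ)^2 * Q a k ≤ ∑ k ∈ (M a)ᶜ, N k := by
            refine Finset.sum_le_sum fun k hk => ?_
            have hg := hgapA a k (Finset.mem_compl.mp hk)
            have h3 : (Δ - δ)^2 ≤ (p a - s k)^2 := by
              rw [← sq_abs (p a - s k)]
              exact pow_le_pow_left₀ (by linarith) hg 2
            exact le_trans (mul_le_mul_of_nonneg_right h3 (hQ0 a k))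
              (Finset.single_le_sum (f := fun b => (p b - s k)^2 * Q b k)
                (fun b _ => mul_nonneg (sq_nonneg _) (hQ0 b k)) (Finset.mem_univ a))
        _ ≤ ∑ k, N k := Finset.sum_le_sum_of_subset_of_nonneg (Finset.subset_univ _)
              (fun k _ _ => hN0 k)
        _ ≤ δ^2 := hNsum
    have h3 : ∑ k ∈ (M a)ᶜ, Q a k < 1 := by
      have h4 : 0 ≤ ∑ k ∈ (M a)ᶜ, Q a k := Finset.sum_nonneg fun k _ => hQ0 a k
      nlinarith
    rw [hsplit]
    linarith
  -- lower bound
  have hTlb : ∀ a, ((M a).card : ℝ) - 1 < ∑ k, Q a k := by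
    intro a
    have hkey : ∀ k ∈ M a, (Δ - δ)^2 * (1 - Q a k) ≤ N k := by
      intro k hk
      have hkd : |p a - s k| ≤ δ := (hMmem a k).mp hk
      have h1 : 1 - Q a k = ∑ b ∈ Finset.univ.erase a, Q b k := by
        have h2 := Finset.add_sum_erase Finset.univ (fun b => Q b k) (Finset.mem_univ a)
        rw [hQsum k] at h2
        linarith
      rw [h1, Finset.mul_sum]
      calc ∑ b ∈ Finset.univ.erase a, (Δ - δ)^2 * Q b k
          ≤ ∑ b ∈ Finset.univ.erase a, (p b - s k)^2 * Q b k := by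
            refine Finset.sum_le_sum fun b hb => ?_
            have hba : b ≠ a := Finset.ne_of_mem_erase hb
            have h3 := hΔ b a hba
            have h4 : |p b - p a| ≤ |p b - s k| + |p a - s k| := by
              rw [abs_sub_comm (p a) (s k)]
              exact abs_sub_le _ _ _
            have h5 : (Δ - δ)^2 ≤ (p b - s k)^2 := by
              rw [← sq_abs (p b - s k)]
              exact pow_le_pow_left₀ (by linarith) (by linarith [abs_nonneg (p a - s k)]) 2
            exact mul_le_mul_of_nonneg_right h5 (hQ0 b k)
        _ ≤ N k := Finset.sum_le_sum_of_subset_of_nonneg (Finset.subset_univ _)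
              (fun b _ _ => mul_nonneg (sq_nonneg _) (hQ0 b k))
    have h2 : (Δ - δ)^2 * ∑ k ∈ M a, (1 - Q a k) ≤ δ^2 := by
      rw [Finset.mul_sum]
      calc ∑ k ∈ M a, (Δ - δ)^2 * (1 - Q a k) ≤ ∑ k ∈ M a, N k := Finset.sum_le_sum hkey
        _ ≤ ∑ k, N k := Finset.sum_le_sum_of_subset_of_nonneg (Finset.subset_univ _)
              (fun k _ _ => hN0 k)
        _ ≤ δ^2 := hNsum
    have h3 : ∑ k ∈ M a, (1 - Q a k) < 1 := by
      have h4 : 0 ≤ ∑ k ∈ M a, (1 - Q a k) :=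
        Finset.sum_nonneg fun k _ => by linarith [hQle1 a k]
      nlinarith
    have h5 : ∑ k ∈ M a, Q a k = (M a).card - ∑ k ∈ M a, (1 - Q a k) := by
      rw [Finset.sum_sub_distrib]
      simp
    have h6 : ∑ k ∈ M a, Q a k ≤ ∑ k, Q a k :=
      Finset.sum_le_sum_of_subset_of_nonneg (Finset.subset_univ _) fun k _ _ => hQ0 a k
    rw [h5] at h6
    linarith
  -- conclusion
  have hTrace : ∀ a, (P a).trace = ((∑ k, Q a k : ℝ) : ℂ) := by
    intro a
    rw [onb_trace ψ hψ]
    push_cast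
    exact Finset.sum_congr rfl fun k _ => hQ_inner a k
  refine ⟨hdisj, fun a => ?_⟩
  obtain ⟨m, hm⟩ := trace_proj_nat (P a) (hPh a) (hPP a)
  have hTm : (∑ k, Q a k) = (m : ℝ) := by
    have h1 := (hTrace a).symm.trans hm
    exact_mod_cast h1
  have hcard : (M a).card = m := by
    have h1 := hTub a
    have h2 := hTlb a
    rw [hTm] at h1 h2
    have h3 : (M a).card < m + 1 := by exact_mod_cast show ((M a).card : ℝ) < m + 1 by linarith
    have h4 : m < (M a).card + 1 := by exact_mod_cast show (m : ℝ) < (M a).card + 1 by linarith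
    omega
  rw [hm, hcard]
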